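/- Let A = ⊕_{d≥0} A_d be a commutative ℕ-graded ring with an action of a finite group G by degree-preserving ring automorphisms, such that β(A) ≤ 1 and |G| is a unit of A. Let m := A_{≥1} = ⊕_{d≥1} A_d. Then β(A^G) ≤ η_G(m), where A^G carries the induced grading. -/

import Mathlib

/-- The ideal generated by the `G`-invariant elements of a (`G`-invariant) ideal `m`. -/
def invIdeal (G : Type*) {A : Type*} [Group G] [CommRing A] [MulSemiringAction G A]
    (m : Ideal A) : Ideal A :=
  Ideal.span {a : A | a ∈ m ∧ ∀ g : G, g • a = a}

/-- `η_G(m) = inf { d : m ^ d ⊆ ⟨m^G⟩ }`, as an element of `ℕ ∪ {∞}`. -/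
noncomputable def eta (G : Type*) {A : Type*} [Group G] [CommRing A] [MulSemiringAction G A]
    (m : Ideal A) : ℕ∞ :=
  sInf ((↑) '' {d : ℕ | m ^ d ≤ invIdeal G m})

/-- For a family `𝒜` of "graded pieces" of `A` and a subring `B` of `A` which is graded
with respect to `𝒜` (e.g. `A` itself, or the invariants of a degree-preserving group
action), `beta 𝒜 B = inf {n : B is generated as a ring by its elements lying in some
𝒜 d with d ≤ n}`, as an element of `ℕ ∪ {∞}`. -/
noncomputable def beta {A : Type*} [CommRing A] (𝒜 : ℕ → Set A) (B : Subring A) : ℕ∞ :=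
  sInf ((↑) '' {n : ℕ | B ≤ Subring.closure {a : A | a ∈ B ∧ ∃ d ≤ n, a ∈ 𝒜 d}})

/-- The subring `A^G` of `G`-invariant elements. -/
def fixedSubring (G A : Type*) [Group G] [CommRing A] [MulSemiringAction G A] : Subring A where
  carrier := {a : A | ∀ g : G, g • a = a}
  mul_mem' := by intro a b ha hb; intro g; rw [smul_mul', ha g, hb g]
  one_mem' := fun g => smul_one g
  add_mem' := by intro a b ha hb; intro g; rw [smul_add, ha g, hb g]
  zero_mem' := fun g => smul_zero g
  neg_mem' := by intro a ha g; rw [smul_neg, ha g]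

open scoped Pointwise

/-- Let `A = ⊕_{d ≥ 0} A_d` be a commutative `ℕ`-graded ring with an
action of a finite group `G` by degree-preserving ring automorphisms, such that
`β(A) ≤ 1` and `|G|` is a unit of `A`.  Let `m = A_{≥1}` (the ideal generated by the
homogeneous elements of positive degree).  Then `β(A^G) ≤ η_G(m)`, where `A^G`
carries the induced grading. -/
theorem beta_fixed_le_eta {G A : Type} [Group G] [Finite G] [CommRing A]
    [MulSemiringAction G A] (𝒜 : ℕ → AddSubgroup A) [GradedRing 𝒜]
    (hdeg : ∀ (g : G) (d : ℕ), ∀ a ∈ 𝒜 d, g • a ∈ 𝒜 d)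
    (hbeta : beta (fun d => (𝒜 d : Set A)) ⊤ ≤ 1)
    (hunit : IsUnit ((Nat.card G : A))) :
    beta (fun d => (𝒜 d : Set A)) (fixedSubring G A) ≤
      eta G (Ideal.span {a : A | ∃ d, 1 ≤ d ∧ a ∈ 𝒜 d}) := by
  classical
  have _inst : Fintype G := Fintype.ofFinite G
  set m : Ideal A := Ideal.span {a : A | ∃ d, 1 ≤ d ∧ a ∈ 𝒜 d} with hm_def
  -- `A` is generated in degrees ≤ 1
  have hA : ∀ x : A, x ∈ Subring.closure {a : A | ∃ d ≤ 1, a ∈ 𝒜 d} := by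
    by_contra hcon
    push_neg at hcon
    obtain ⟨x0, hx0⟩ := hcon
    have h2 : (2 : ℕ∞) ≤ beta (fun d => (𝒜 d : Set A)) ⊤ := by
      apply le_sInf
      rintro b ⟨k, hk, rfl⟩
      rcases le_or_gt 2 (k : ℕ∞) with h | h
      · exact h
      exfalso
      have hk2 : k < 2 := by exact_mod_cast h
      refine hx0 ?_
      refine Subring.closure_mono ?_ (hk (Subring.mem_top x0))
      rintro a ⟨-, d, hd, ha⟩
      exact ⟨d, by omega, ha⟩
    have := h2.trans hbeta
    norm_num at this
  -- the inverse of `|G|` in degree 0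
  obtain ⟨u, hu⟩ := hunit
  have hN0 : ((Nat.card G : A)) ∈ 𝒜 0 := by
    have h1 : (1 : A) ∈ 𝒜 0 := SetLike.GradedOne.one_mem
    simpa using nsmul_mem h1 (Nat.card G)
  set c0 : A := (DirectSum.decompose 𝒜 ((u⁻¹ : Aˣ) : A) 0 : A) with hc0_def
  have hc0mem : c0 ∈ 𝒜 0 := SetLike.coe_mem _
  have hc0N : c0 * (Nat.card G : A) = 1 := by
    have h1 := DirectSum.coe_decompose_mul_of_right_mem_of_le 𝒜 hN0 (le_refl 0)
      (a := ((u⁻¹ : Aˣ) : A))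
    rw [Nat.sub_self] at h1
    rw [hc0_def, ← h1, ← hu, Units.inv_mul,
      DirectSum.decompose_of_mem_same 𝒜 (SetLike.GradedOne.one_mem)]
  have hNfix : ∀ g : G, g • ((Nat.card G : A)) = (Nat.card G : A) := by
    intro g
    rw [← MulSemiringAction.toRingHom_apply]
    exact map_natCast _ _
  have hc0fix : ∀ g : G, g • c0 = c0 := by
    intro g
    have h1 : (g • c0) * (Nat.card G : A) = 1 := by
      rw [← hNfix g, ← smul_mul', hc0N, smul_one]
    calc g • c0 = (g • c0) * (c0 * (Nat.card G : A)) := by rw [hc0N, mul_one]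
      _ = ((g • c0) * (Nat.card G : A)) * c0 := by ring
      _ = c0 := by rw [h1, one_mul]
  -- the Reynolds operator
  set ρ : A →+ A := AddMonoidHom.mk' (fun y => c0 * ∑ g : G, g • y)
    (fun x y => by simp [smul_add, Finset.sum_add_distrib, mul_add]) with hρ_def
  have hρ_apply : ∀ y, ρ y = c0 * ∑ g : G, g • y := fun y => rfl
  have hρdeg : ∀ (t : ℕ) (y : A), y ∈ 𝒜 t → ρ y ∈ 𝒜 t := by
    intro t y hy
    have hsum : (∑ g : G, g • y) ∈ 𝒜 t := sum_mem (fun g _ => hdeg g t y hy)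
    have h2 := SetLike.mul_mem_graded hc0mem hsum
    rw [zero_add] at h2
    rw [hρ_apply]
    exact h2
  have hρinv : ∀ (y : A) (g : G), g • ρ y = ρ y := by
    intro y g
    rw [hρ_apply, smul_mul', hc0fix, Finset.smul_sum]
    congr 1
    simp_rw [smul_smul]
    exact Fintype.sum_equiv (Equiv.mulLeft g) _ _ (fun h => by simp)
  have hρmul : ∀ (y f : A), (∀ g : G, g • f = f) → ρ (y * f) = ρ y * f := by
    intro y f hf
    rw [hρ_apply, hρ_apply]
    simp_rw [smul_mul', hf]
    rw [← Finset.sum_mul, ← mul_assoc]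
  have hρfix : ∀ y : A, (∀ g : G, g • y = y) → ρ y = y := by
    intro y hy
    rw [hρ_apply]
    simp_rw [hy]
    rw [Finset.sum_const, Finset.card_univ, ← Nat.card_eq_fintype_card, nsmul_eq_mul,
      ← mul_assoc, hc0N, one_mul]
  -- projections commute with the action
  have hcomm : ∀ (x : A) (g : G) (d : ℕ),
      GradedRing.proj 𝒜 d (g • x) = g • GradedRing.proj 𝒜 d x := by
    intro x
    induction x using DirectSum.Decomposition.inductionOn 𝒜 with
    | zero => intro g d; simp
    | @homogeneous i y =>
      intro g d
      by_cases h : i = d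
      · subst h
        rw [GradedRing.proj_apply, GradedRing.proj_apply,
          DirectSum.decompose_of_mem_same 𝒜 (hdeg g i y y.2),
          DirectSum.decompose_of_mem_same 𝒜 y.2]
      · rw [GradedRing.proj_apply, GradedRing.proj_apply,
          DirectSum.decompose_of_mem_ne 𝒜 (hdeg g i y y.2) h,
          DirectSum.decompose_of_mem_ne 𝒜 y.2 h, smul_zero]
    | add y z hy hz =>
      intro g d
      rw [smul_add, map_add, map_add, smul_add, hy, hz]
  -- degree-0 part of m vanishes
  have hm0 : ∀ q ∈ m, (DirectSum.decompose 𝒜 q 0 : A) = 0 := by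
    have hle : m ≤ RingHom.ker (GradedRing.projZeroRingHom 𝒜) := by
      rw [hm_def, Ideal.span_le]
      rintro p ⟨e, he, hp⟩
      rw [SetLike.mem_coe, RingHom.mem_ker, GradedRing.projZeroRingHom_apply]
      exact DirectSum.decompose_of_mem_ne 𝒜 hp (by omega)
    intro q hq
    have := hle hq
    rwa [RingHom.mem_ker, GradedRing.projZeroRingHom_apply] at this
  have h𝒜m : ∀ e, 1 ≤ e → ∀ p ∈ 𝒜 e, p ∈ m := by
    intro e he p hp
    rw [hm_def]
    exact Ideal.subset_span ⟨e, he, hp⟩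
  -- homogeneous elements of degree ≥ k lie in m ^ k
  have hdecpow : ∀ (k : ℕ) (x : A) (d : ℕ), GradedRing.proj 𝒜 d x ∈ m ^ (min d k) := by
    intro k x
    induction hA x using Subring.closure_induction with
    | mem y hy =>
      intro d
      obtain ⟨d0, hd0, hy'⟩ := hy
      by_cases h : d0 = d
      · subst h
        rw [GradedRing.proj_apply, DirectSum.decompose_of_mem_same 𝒜 hy']
        rcases Nat.eq_zero_or_pos (min d0 k) with h0 | h0
        · rw [h0, pow_zero, Ideal.one_eq_top]; trivial
        · have h1 : min d0 k = 1 := by omega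
          rw [h1, pow_one]
          exact h𝒜m d0 (by omega) y hy'
      · rw [GradedRing.proj_apply, DirectSum.decompose_of_mem_ne 𝒜 hy' h]
        exact zero_mem _
    | zero => intro d; rw [map_zero]; exact zero_mem _
    | one =>
      intro d
      by_cases h : d = 0
      · subst h
        have hmin : min 0 k = 0 := by omega
        rw [hmin, pow_zero, Ideal.one_eq_top]; trivial
      · rw [GradedRing.proj_apply,
          DirectSum.decompose_of_mem_ne 𝒜 (SetLike.GradedOne.one_mem) (fun hh => h hh.symm)]
        exact zero_mem _
    | add y z hy hz py pz => intro d; rw [map_add]; exact add_mem (py d) (pz d)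
    | neg y hy py => intro d; rw [map_neg]; exact neg_mem (py d)
    | mul y z hy hz py pz =>
      intro d
      rw [GradedRing.proj_apply, DirectSum.decompose_mul, DirectSum.coe_mul_apply]
      refine sum_mem fun ij hij => ?_
      rw [Finset.mem_filter] at hij
      obtain ⟨-, hij⟩ := hij
      have h1 : (DirectSum.decompose 𝒜 y ij.1 : A) * (DirectSum.decompose 𝒜 z ij.2 : A) ∈
          m ^ (min ij.1 k) * m ^ (min ij.2 k) := by
        refine Ideal.mul_mem_mul ?_ ?_
        · have := py ij.1; rwa [GradedRing.proj_apply] at this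
        · have := pz ij.2; rwa [GradedRing.proj_apply] at this
      have h2 : m ^ (min ij.1 k) * m ^ (min ij.2 k) ≤ m ^ (min d k) := by
        rw [← pow_add]
        exact Ideal.pow_le_pow_right (by omega)
      exact h2 h1
  have hpow : ∀ (k d : ℕ) (x : A), x ∈ 𝒜 d → k ≤ d → x ∈ m ^ k := by
    intro k d x hx hkd
    have h1 := hdecpow k x d
    rw [GradedRing.proj_apply, DirectSum.decompose_of_mem_same 𝒜 hx] at h1
    have hmin : min d k = k := by omega
    rwa [hmin] at h1
  -- now the main argument
  refine le_sInf ?_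
  rintro b ⟨n, hn, rfl⟩
  refine sInf_le ⟨n, ?_, rfl⟩
  show fixedSubring G A ≤
    Subring.closure {a : A | a ∈ fixedSubring G A ∧ ∃ d ≤ n, a ∈ 𝒜 d}
  set R : Subring A :=
    Subring.closure {a : A | a ∈ fixedSubring G A ∧ ∃ d ≤ n, a ∈ 𝒜 d} with hR_def
  have hmain : ∀ (d : ℕ) (x : A), x ∈ 𝒜 d → (∀ g : G, g • x = x) → x ∈ R := by
    intro d
    induction d using Nat.strong_induction_on with
    | _ d IH =>
    intro x hx hinv
    by_cases hdn : d ≤ n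
    · exact Subring.subset_closure ⟨hinv, d, hdn, hx⟩
    · push_neg at hdn
      have hxm : x ∈ invIdeal G m * m := by
        have h1 : x ∈ m ^ (n + 1) := hpow (n + 1) d x hx (by omega)
        have h2 : m ^ (n + 1) ≤ invIdeal G m * m := by
          rw [pow_succ]
          exact Ideal.mul_mono_left hn
        exact h2 h1
      have hxsp : x ∈ Ideal.span
          ({a : A | a ∈ m ∧ ∀ g : G, g • a = a} * {a : A | ∃ e, 1 ≤ e ∧ a ∈ 𝒜 e}) := by
        refine (Ideal.mul_le.mpr ?_) hxm
        intro q hq z hz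
        rw [← Ideal.span_mul_span']
        exact Submodule.mul_mem_mul hq (hm_def ▸ hz)
      have hkey : ∀ w ∈ Ideal.span
          ({a : A | a ∈ m ∧ ∀ g : G, g • a = a} * {a : A | ∃ e, 1 ≤ e ∧ a ∈ 𝒜 e}),
          ∀ c : A, ρ (GradedRing.proj 𝒜 d (c * w)) ∈ R := by
        intro w hw
        induction hw using Submodule.span_induction with
        | mem w hw =>
          obtain ⟨q, hq, p, hp, rfl⟩ := hw
          obtain ⟨hqm, hqinv⟩ := hq
          obtain ⟨e, he, hpe⟩ := hp
          intro c
          have hfactor : c * (q * p) = ∑ j ∈ (DirectSum.decompose 𝒜 q).support,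
              c * (p * (DirectSum.decompose 𝒜 q j : A)) := by
            conv_lhs => rw [← DirectSum.sum_support_decompose 𝒜 q]
            rw [Finset.sum_mul, Finset.mul_sum]
            exact Finset.sum_congr rfl fun j _ => by ring
          rw [hfactor, map_sum, map_sum]
          refine sum_mem fun j hj => ?_
          by_cases hj0 : j = 0
          · subst hj0
            rw [hm0 q hqm, mul_zero, mul_zero, map_zero, map_zero]
            exact zero_mem _
          · set qj : A := (DirectSum.decompose 𝒜 q j : A) with hqj_def
            have hqj : qj ∈ 𝒜 j := SetLike.coe_mem _
            have hqjinv : ∀ g : G, g • qj = qj := by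
              intro g
              have h2 := hcomm q g j
              rw [hqinv g] at h2
              simp only [GradedRing.proj_apply] at h2
              exact h2.symm
            have hppq : p * qj ∈ 𝒜 (e + j) := SetLike.mul_mem_graded hpe hqj
            by_cases hle : e + j ≤ d
            · have hproj : GradedRing.proj 𝒜 d (c * (p * qj)) =
                  (DirectSum.decompose 𝒜 c (d - (e + j)) : A) * (p * qj) := by
                rw [GradedRing.proj_apply,
                  DirectSum.coe_decompose_mul_of_right_mem_of_le 𝒜 hppq hle]
              rw [hproj]
              set c' : A := (DirectSum.decompose 𝒜 c (d - (e + j)) : A) with hc'_def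
              have hc'mem : c' ∈ 𝒜 (d - (e + j)) := SetLike.coe_mem _
              have hw : ρ (c' * p) ∈ 𝒜 (d - (e + j) + e) :=
                hρdeg _ _ (SetLike.mul_mem_graded hc'mem hpe)
              have hrw : ρ (c' * (p * qj)) = ρ (c' * p) * qj := by
                rw [← mul_assoc]
                exact hρmul _ _ hqjinv
              rw [hrw]
              have h1 : ρ (c' * p) ∈ R :=
                IH (d - (e + j) + e) (by omega) _ hw (fun g => hρinv _ g)
              have h2 : qj ∈ R := IH j (by omega) _ hqj hqjinv
              exact mul_mem h1 h2
            · rw [GradedRing.proj_apply,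
                DirectSum.coe_decompose_mul_of_right_mem_of_not_le 𝒜 hppq hle, map_zero]
              exact zero_mem _
        | zero =>
          intro c
          rw [mul_zero, map_zero, map_zero]
          exact zero_mem _
        | add y z hy hz py pz =>
          intro c
          rw [mul_add, map_add, map_add]
          exact add_mem (py c) (pz c)
        | smul r z hz pz =>
          intro c
          rw [smul_eq_mul, ← mul_assoc]
          exact pz (c * r)
      have h3 := hkey x hxsp 1
      rw [one_mul, GradedRing.proj_apply, DirectSum.decompose_of_mem_same 𝒜 hx,
        hρfix x hinv] at h3
      exact h3
  intro a ha
  have hinv : ∀ g : G, g • a = a := ha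
  rw [← DirectSum.sum_support_decompose 𝒜 a]
  refine sum_mem fun j hj => ?_
  refine hmain j _ (SetLike.coe_mem _) ?_
  intro g
  have h2 := hcomm a g j
  rw [hinv g] at h2
  simp only [GradedRing.proj_apply] at h2
  exact h2.symm
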